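/- Let p ≥ 1 and α_1,…,α_p ∈ [0,1] with α_p > 0, and suppose the greatest common divisor of {i ∈ {1,…,p} : α_i > 0} equals 1. Let r = ρ(A) and let Π = u vᵀ be the rank-one matrix formed from the explicit right and left Perron eigenvectors u, v with uᵀv = 1. Then there exist constants c > 0 and 0 < ρ₀ < 1 such that for all n ∈ ℕ, ‖r^{−n} A^n − Π‖ ≤ c ρ₀^n, where ‖·‖ is the operator norm. -/

import Mathlib

open Matrix Filter

noncomputable section

/-- The companion matrix with first row `(α_1, …, α_p)` and subdiagonal entries `1`. -/
def companion (p : ℕ) (α : Fin p → ℝ) : Matrix (Fin p) (Fin p) ℝ :=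
  Matrix.of fun i j => if (i : ℕ) = 0 then α j else if (i : ℕ) = (j : ℕ) + 1 then 1 else 0

/-- The spectral radius of a real matrix: the maximum (supremum) of the moduli of its
complex eigenvalues. -/
def specRad {p : ℕ} (A : Matrix (Fin p) (Fin p) ℝ) : ℝ :=
  sSup {r : ℝ | ∃ z ∈ spectrum ℂ (A.map (Complex.ofReal : ℝ → ℂ)), ‖z‖ = r}

/-- The right Perron vector (0-based indices). -/
def perronU (p : ℕ) (r : ℝ) : Fin p → ℝ :=
  fun i => r ^ (-(i : ℤ)) / ∑ k : Fin p, r ^ (-(k : ℤ))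

/-- The left Perron vector (0-based indices). -/
def perronV (p : ℕ) (α : Fin p → ℝ) (r : ℝ) : Fin p → ℝ :=
  fun i => (∑ k : Fin p, r ^ (-(k : ℤ))) /
      (∑ k : Fin p, ((k : ℕ) + 1 : ℝ) * α k * r ^ (-((k : ℕ) + 1 : ℤ))) *
      ∑ ℓ ∈ Finset.univ.filter (fun ℓ : Fin p => i ≤ ℓ),
        α ℓ * r ^ ((i : ℤ) - (ℓ : ℤ) - 1)

/-- The operator norm of a real matrix, i.e. the norm of the induced continuous linear map
on Euclidean space. -/
def opNorm {p : ℕ} (B : Matrix (Fin p) (Fin p) ℝ) : ℝ :=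
  ‖Matrix.toEuclideanCLM (𝕜 := ℝ) B‖



namespace PFAux

variable {p : ℕ}

/-- the characteristic function `g t = ∑ α_k t^{-(k+1)}`. -/
def g (p : ℕ) (α : Fin p → ℝ) (t : ℝ) : ℝ := ∑ k : Fin p, α k * (t⁻¹) ^ ((k : ℕ) + 1)

lemma g_strictAnti (hp : 0 < p) (α : Fin p → ℝ) (hα : ∀ i, 0 ≤ α i)
    (hαp : 0 < α ⟨p - 1, Nat.sub_lt hp Nat.one_pos⟩) {s t : ℝ} (hs : 0 < s) (hst : s < t) :
    g p α t < g p α s := by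
  have ht : 0 < t := hs.trans hst
  have hinv : t⁻¹ < s⁻¹ := by exact inv_strictAnti₀ hs hst
  have htinv : 0 < t⁻¹ := by positivity
  refine Finset.sum_lt_sum (fun k _ => ?_) ⟨⟨p - 1, by omega⟩, Finset.mem_univ _, ?_⟩
  · exact mul_le_mul_of_nonneg_left (pow_le_pow_left₀ htinv.le hinv.le _) (hα k)
  · exact mul_lt_mul_of_pos_left (pow_lt_pow_left₀ hinv htinv.le (by omega)) hαp

lemma exists_root (hp : 0 < p) (α : Fin p → ℝ) (hα : ∀ i, α i ∈ Set.Icc (0:ℝ) 1)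
    (hαp : 0 < α ⟨p - 1, Nat.sub_lt hp Nat.one_pos⟩) :
    ∃ r : ℝ, 0 < r ∧ g p α r = 1 := by
  set l : Fin p := ⟨p - 1, by omega⟩
  set a : ℝ := min (α l) 1 with ha_def
  have ha0 : 0 < a := lt_min hαp one_pos
  have ha1 : a ≤ 1 := min_le_right _ _
  set b : ℝ := (p : ℝ) + 1 with hb_def
  have hb1 : (1:ℝ) ≤ b := by have : (0:ℝ) ≤ (p:ℝ) := Nat.cast_nonneg p; linarith
  have hab : a ≤ b := ha1.trans hb1
  have hcont : ContinuousOn (g p α) (Set.Icc a b) := by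
    apply continuousOn_finset_sum
    intro k _
    exact (continuousOn_const.mul ((continuousOn_id.inv₀
      (fun x hx => ne_of_gt (lt_of_lt_of_le ha0 hx.1))).pow _))
  have hga : 1 ≤ g p α a := by
    have h1 : a * (a⁻¹) ^ p ≤ α l * (a⁻¹) ^ ((l : ℕ) + 1) := by
      have : ((l : ℕ) + 1) = p := by simp [l]; omega
      rw [this]
      exact mul_le_mul_of_nonneg_right (min_le_left _ _) (by positivity)
    have h2 : (1:ℝ) ≤ a * (a⁻¹) ^ p := by
      have hainv : 1 ≤ a⁻¹ := (one_le_inv₀ ha0).mpr ha1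
      calc (1:ℝ) = a * a⁻¹ := by field_simp
      _ ≤ a * (a⁻¹)^p := by
          refine mul_le_mul_of_nonneg_left ?_ ha0.le
          calc a⁻¹ = (a⁻¹)^1 := (pow_one _).symm
          _ ≤ (a⁻¹)^p := pow_le_pow_right₀ hainv hp
    refine (h2.trans h1).trans ?_
    refine Finset.single_le_sum (f := fun k : Fin p => α k * (a⁻¹)^((k:ℕ)+1))
      (fun k _ => ?_) (Finset.mem_univ l)
    exact mul_nonneg (hα k).1 (by positivity)
  have hgb : g p α b ≤ (p : ℝ) / ((p:ℝ)+1) := by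
    have : g p α b ≤ ∑ _k : Fin p, b⁻¹ := by
      refine Finset.sum_le_sum (fun k _ => ?_)
      have hbinv : b⁻¹ ≤ 1 := inv_le_one_of_one_le₀ hb1
      have hbinv0 : 0 ≤ b⁻¹ := by positivity
      calc α k * (b⁻¹)^((k:ℕ)+1) ≤ 1 * (b⁻¹)^((k:ℕ)+1) :=
            mul_le_mul_of_nonneg_right (hα k).2 (by positivity)
      _ = (b⁻¹)^((k:ℕ)+1) := one_mul _
      _ ≤ (b⁻¹)^1 := pow_le_pow_of_le_one hbinv0 hbinv (by omega)
      _ = b⁻¹ := pow_one _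
    simpa [hb_def, div_eq_mul_inv] using this
  have hgb1 : g p α b ≤ 1 := by
    refine hgb.trans ?_
    rw [div_le_one (by positivity)]
    linarith
  have h1mem : (1:ℝ) ∈ Set.Icc (g p α b) (g p α a) := ⟨hgb1, hga⟩
  have := intermediate_value_Icc' hab hcont h1mem
  obtain ⟨r, hr, hgr⟩ := this
  exact ⟨r, lt_of_lt_of_le ha0 hr.1, hgr⟩

end PFAux


namespace PFAux

variable {p : ℕ} {F : Type*} [Field F]

/-- generic companion-shape matrix -/
def comp' (p : ℕ) (F : Type*) [Field F] (β : Fin p → F) : Matrix (Fin p) (Fin p) F :=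
  Matrix.of fun i j => if (i : ℕ) = 0 then β j else if (i : ℕ) = (j : ℕ) + 1 then 1 else 0

lemma comp'_mulVec (β : Fin p → F) (x : Fin p → F) (i : Fin p) :
    (comp' p F β *ᵥ x) i =
      if hi : (i : ℕ) = 0 then ∑ j, β j * x j else x ⟨(i : ℕ) - 1, by omega⟩ := by
  by_cases hi : (i : ℕ) = 0
  · simp only [hi, dif_pos]
    simp [mulVec, dotProduct, comp', hi]
  · rw [dif_neg hi]
    simp only [mulVec, dotProduct, comp', Matrix.of_apply, hi, if_false]
    rw [Finset.sum_eq_single (⟨(i : ℕ) - 1, by omega⟩ : Fin p)]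
    · rw [if_pos (by show (i:ℕ) = (i:ℕ) - 1 + 1; omega)]
      ring
    · intro j _ hj
      rw [if_neg, zero_mul]
      intro h
      apply hj
      apply Fin.ext
      show (j : ℕ) = (i : ℕ) - 1
      omega
    · intro h
      exact absurd (Finset.mem_univ _) h

lemma comp'_vecMul (hp : 0 < p) (β : Fin p → F) (v : Fin p → F) (j : Fin p) :
    (v ᵥ* comp' p F β) j =
      v ⟨0, hp⟩ * β j + (if h : (j : ℕ) + 1 < p then v ⟨(j : ℕ) + 1, h⟩ else 0) := by
  simp only [vecMul, dotProduct, comp', Matrix.of_apply]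
  have key : ∀ i : Fin p, v i * (if (i : ℕ) = 0 then β j else if (i : ℕ) = (j : ℕ) + 1 then 1 else 0)
      = (if (i : ℕ) = 0 then v i * β j else 0)
        + (if (i : ℕ) = (j : ℕ) + 1 then v i else 0) := by
    intro i
    by_cases hi : (i : ℕ) = 0
    · rw [if_pos hi, if_pos hi, if_neg (by omega), add_zero]
    · rw [if_neg hi, if_neg hi, zero_add]
      by_cases hij : (i : ℕ) = (j : ℕ) + 1
      · rw [if_pos hij, if_pos hij, mul_one]
      · rw [if_neg hij, if_neg hij, mul_zero]
  rw [Finset.sum_congr rfl (fun i _ => key i), Finset.sum_add_distrib]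
  congr 1
  · rw [Finset.sum_eq_single (⟨0, hp⟩ : Fin p)]
    · simp
    · intro i _ hi
      rw [if_neg]
      simpa [Fin.ext_iff] using hi
    · intro h; exact absurd (Finset.mem_univ _) h
  · by_cases h : (j : ℕ) + 1 < p
    · rw [dif_pos h, Finset.sum_eq_single (⟨(j : ℕ) + 1, h⟩ : Fin p)]
      · simp
      · intro i _ hi
        rw [if_neg]
        simpa [Fin.ext_iff] using hi
      · intro h'; exact absurd (Finset.mem_univ _) h'
    · rw [dif_neg h, Finset.sum_eq_zero]
      intro i _
      rw [if_neg]
      omega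

lemma companion_eq (p : ℕ) (α : Fin p → ℝ) : companion p α = comp' p ℝ α := rfl

lemma companion_map (p : ℕ) (α : Fin p → ℝ) :
    (companion p α).map (Complex.ofReal : ℝ → ℂ) = comp' p ℂ (fun k => (α k : ℂ)) := by
  ext i j
  simp only [Matrix.map_apply, companion, comp', Matrix.of_apply]
  split_ifs <;> simp

lemma mem_spectrum_iff {n : Type*} [Fintype n] [DecidableEq n] (M : Matrix n n ℂ) (μ : ℂ) :
    μ ∈ spectrum ℂ M ↔ ∃ x : n → ℂ, x ≠ 0 ∧ M *ᵥ x = μ • x := by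
  rw [spectrum.mem_iff]
  have halg : (algebraMap ℂ (Matrix n n ℂ)) μ - M = μ • (1 : Matrix n n ℂ) - M := by
    rw [Algebra.algebraMap_eq_smul_one]
  rw [halg]
  constructor
  · intro h
    have hdet : (μ • (1 : Matrix n n ℂ) - M).det = 0 := by
      by_contra hd
      exact h ((Matrix.isUnit_iff_isUnit_det _).mpr (isUnit_iff_ne_zero.mpr hd))
    obtain ⟨x, hx0, hx⟩ := (Matrix.exists_mulVec_eq_zero_iff).mpr hdet
    refine ⟨x, hx0, ?_⟩
    rw [Matrix.sub_mulVec, sub_eq_zero] at hx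
    rw [← hx, Matrix.smul_mulVec, Matrix.one_mulVec]
  · rintro ⟨x, hx0, hx⟩
    intro h
    have hdet : (μ • (1 : Matrix n n ℂ) - M).det = 0 := by
      rw [← Matrix.exists_mulVec_eq_zero_iff]
      refine ⟨x, hx0, ?_⟩
      rw [Matrix.sub_mulVec, Matrix.smul_mulVec, Matrix.one_mulVec, hx, sub_self]
    have := (Matrix.isUnit_iff_isUnit_det _).mp h
    rw [isUnit_iff_ne_zero] at this
    exact this hdet

lemma sum_shift_eigen (β : Fin p → F) {μ : F} (hμ : μ ≠ 0)
    (hchar : ∑ k, β k * (μ⁻¹) ^ ((k : ℕ) + 1) = 1) :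
    ∑ j : Fin p, β j * (μ⁻¹) ^ (j : ℕ) = μ := by
  have hterm : ∀ j : Fin p, μ * (β j * (μ⁻¹) ^ ((j : ℕ) + 1)) = β j * (μ⁻¹) ^ (j : ℕ) := by
    intro j
    rw [pow_succ]
    calc μ * (β j * ((μ⁻¹) ^ (j : ℕ) * μ⁻¹)) = (μ * μ⁻¹) * (β j * (μ⁻¹) ^ (j : ℕ)) := by ring
    _ = β j * (μ⁻¹) ^ (j : ℕ) := by rw [mul_inv_cancel₀ hμ, one_mul]
  calc ∑ j : Fin p, β j * (μ⁻¹) ^ (j : ℕ)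
      = ∑ j : Fin p, μ * (β j * (μ⁻¹) ^ ((j : ℕ) + 1)) :=
        (Finset.sum_congr rfl (fun j _ => (hterm j).symm))
  _ = μ * ∑ j : Fin p, β j * (μ⁻¹) ^ ((j : ℕ) + 1) := (Finset.mul_sum _ _ _).symm
  _ = μ := by rw [hchar, mul_one]

lemma comp'_eigen_aux (hp : 0 < p) (β : Fin p → F) {μ : F} (hμ : μ ≠ 0)
    (hchar : ∑ k, β k * (μ⁻¹) ^ ((k : ℕ) + 1) = 1) :
    comp' p F β *ᵥ (fun i : Fin p => (μ⁻¹) ^ (i : ℕ)) =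
      μ • (fun i : Fin p => (μ⁻¹) ^ (i : ℕ)) := by
  funext i
  rw [comp'_mulVec]
  by_cases hi : (i : ℕ) = 0
  · rw [dif_pos hi]
    simp only [Pi.smul_apply, smul_eq_mul, hi, pow_zero, mul_one]
    exact sum_shift_eigen β hμ hchar
  · rw [dif_neg hi]
    simp only [Pi.smul_apply, smul_eq_mul]
    have h1 : (i : ℕ) - 1 + 1 = (i : ℕ) := by omega
    calc (μ⁻¹) ^ ((i : ℕ) - 1) = (μ * μ⁻¹) * (μ⁻¹) ^ ((i : ℕ) - 1) := by
          rw [mul_inv_cancel₀ hμ, one_mul]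
    _ = μ * ((μ⁻¹) ^ ((i : ℕ) - 1) * μ⁻¹) := by ring
    _ = μ * (μ⁻¹) ^ ((i : ℕ) - 1 + 1) := by rw [pow_succ]
    _ = μ * (μ⁻¹) ^ (i : ℕ) := by rw [h1]

lemma eigvec_structure (hp : 0 < p) (β : Fin p → F) {μ : F} (hμ : μ ≠ 0)
    {x : Fin p → F} (hx : comp' p F β *ᵥ x = μ • x) (i : Fin p) :
    x i = (μ⁻¹) ^ (i : ℕ) * x ⟨0, hp⟩ := by
  obtain ⟨m, hm⟩ := i
  induction m with
  | zero => simp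
  | succ m ih =>
    have hm' : m < p := by omega
    have hrow := congrFun hx ⟨m + 1, hm⟩
    rw [comp'_mulVec, dif_neg (by simp)] at hrow
    simp only [Pi.smul_apply, smul_eq_mul] at hrow
    have hxm : x ⟨m + 1 - 1, by omega⟩ = x ⟨m, hm'⟩ := rfl
    rw [hxm, ih hm'] at hrow
    have hkey : x ⟨m + 1, hm⟩ = μ⁻¹ * ((μ⁻¹) ^ m * x ⟨0, hp⟩) := by
      calc x ⟨m + 1, hm⟩ = (μ⁻¹ * μ) * x ⟨m + 1, hm⟩ := by rw [inv_mul_cancel₀ hμ, one_mul]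
      _ = μ⁻¹ * (μ * x ⟨m + 1, hm⟩) := by ring
      _ = μ⁻¹ * ((μ⁻¹) ^ m * x ⟨0, hp⟩) := by rw [← hrow]
    rw [hkey]
    show μ⁻¹ * ((μ⁻¹) ^ m * x ⟨0, hp⟩) = (μ⁻¹) ^ (m + 1) * x ⟨0, hp⟩
    rw [pow_succ]; ring

lemma spectrum_companion_forward (hp : 0 < p) (α : Fin p → ℝ)
    (hα : ∀ i, α i ∈ Set.Icc (0:ℝ) 1) (hαp : 0 < α ⟨p - 1, Nat.sub_lt hp Nat.one_pos⟩) {μ : ℂ}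
    (hμmem : μ ∈ spectrum ℂ (comp' p ℂ (fun k => (α k : ℂ)))) :
    μ ≠ 0 ∧ ∑ k : Fin p, (α k : ℂ) * (μ⁻¹) ^ ((k : ℕ) + 1) = 1 := by
  obtain ⟨x, hx0, hx⟩ := (mem_spectrum_iff _ _).mp hμmem
  have hμ : μ ≠ 0 := by
    rintro rfl
    rw [zero_smul] at hx
    have hsmall : ∀ m : ℕ, (hm : m < p - 1) → x ⟨m, by omega⟩ = 0 := by
      intro m hm
      have hrow := congrFun hx ⟨m + 1, by omega⟩
      rw [comp'_mulVec, dif_neg (by simp)] at hrow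
      simpa using hrow
    have hlast : x ⟨p - 1, by omega⟩ = 0 := by
      have hrow := congrFun hx ⟨0, hp⟩
      rw [comp'_mulVec, dif_pos rfl] at hrow
      simp only [Pi.zero_apply] at hrow
      rw [Finset.sum_eq_single (⟨p - 1, by omega⟩ : Fin p)] at hrow
      · have hαne : ((α ⟨p - 1, by omega⟩ : ℝ) : ℂ) ≠ 0 := by
          exact_mod_cast ne_of_gt hαp
        exact (mul_eq_zero.mp hrow).resolve_left hαne
      · intro j _ hj
        have hjlt : (j : ℕ) < p - 1 := by
          rcases Nat.lt_or_ge (j : ℕ) (p - 1) with h | h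
          · exact h
          · exfalso; apply hj; apply Fin.ext; show (j : ℕ) = p - 1
            have := j.2; omega
        have hj0 : x j = 0 := hsmall (j : ℕ) hjlt
        rw [hj0, mul_zero]
      · intro h; exact absurd (Finset.mem_univ _) h
    apply hx0
    funext i
    rw [Pi.zero_apply]
    obtain ⟨m, hm⟩ := i
    by_cases h : m < p - 1
    · exact hsmall m h
    · have hmeq : m = p - 1 := by omega
      subst hmeq
      exact hlast
  refine ⟨hμ, ?_⟩
  have hx0' : x ⟨0, hp⟩ ≠ 0 := by
    intro h0
    apply hx0
    funext i
    rw [Pi.zero_apply, eigvec_structure hp _ hμ hx i, h0, mul_zero]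
  have hrow := congrFun hx ⟨0, hp⟩
  rw [comp'_mulVec, dif_pos rfl] at hrow
  simp only [Pi.smul_apply, smul_eq_mul] at hrow
  have hsum : (∑ j : Fin p, (α j : ℂ) * (μ⁻¹) ^ (j : ℕ)) * x ⟨0, hp⟩ = μ * x ⟨0, hp⟩ := by
    rw [Finset.sum_mul, ← hrow]
    exact Finset.sum_congr rfl (fun j _ => by
      rw [eigvec_structure hp _ hμ hx j]; ring)
  have hsum2 : ∑ j : Fin p, (α j : ℂ) * (μ⁻¹) ^ (j : ℕ) = μ := mul_right_cancel₀ hx0' hsum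
  calc ∑ k : Fin p, (α k : ℂ) * (μ⁻¹) ^ ((k : ℕ) + 1)
      = (∑ k : Fin p, (α k : ℂ) * (μ⁻¹) ^ (k : ℕ)) * μ⁻¹ := by
        rw [Finset.sum_mul]
        exact Finset.sum_congr rfl (fun k _ => by rw [pow_succ]; ring)
  _ = μ * μ⁻¹ := by rw [hsum2]
  _ = 1 := mul_inv_cancel₀ hμ

lemma spectrum_companion_backward (hp : 0 < p) (α : Fin p → ℝ) {μ : ℂ} (hμ : μ ≠ 0)
    (hchar : ∑ k : Fin p, (α k : ℂ) * (μ⁻¹) ^ ((k : ℕ) + 1) = 1) :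
    μ ∈ spectrum ℂ (comp' p ℂ (fun k => (α k : ℂ))) := by
  rw [mem_spectrum_iff]
  refine ⟨fun i : Fin p => (μ⁻¹) ^ (i : ℕ), ?_, comp'_eigen_aux hp _ hμ hchar⟩
  intro h
  have := congrFun h ⟨0, hp⟩
  simp at this

lemma spectrum_abs_le (hp : 0 < p) (α : Fin p → ℝ)
    (hα : ∀ i, α i ∈ Set.Icc (0:ℝ) 1) (hαp : 0 < α ⟨p - 1, Nat.sub_lt hp Nat.one_pos⟩)
    {r : ℝ} (hr : 0 < r) (hchar : ∑ k : Fin p, α k * (r⁻¹) ^ ((k : ℕ) + 1) = 1)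
    {z : ℂ} (hz : z ∈ spectrum ℂ (comp' p ℂ (fun k => (α k : ℂ)))) :
    ‖z‖ ≤ r := by
  obtain ⟨hz0, hcharz⟩ := spectrum_companion_forward hp α hα hαp hz
  have habs : (1:ℝ) ≤ ∑ k : Fin p, α k * (‖z‖⁻¹) ^ ((k : ℕ) + 1) := by
    have h1 : ‖∑ k : Fin p, (α k : ℂ) * (z⁻¹) ^ ((k : ℕ) + 1)‖ = 1 := by
      rw [hcharz]; simp
    have h2 := norm_sum_le Finset.univ (fun k : Fin p => (α k : ℂ) * (z⁻¹) ^ ((k : ℕ) + 1))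
    rw [h1] at h2
    refine h2.trans_eq (Finset.sum_congr rfl (fun k _ => ?_))
    rw [norm_mul, norm_pow, norm_inv, Complex.norm_real, Real.norm_eq_abs, abs_of_nonneg (hα k).1]
  by_contra hlt
  push_neg at hlt
  have : g p α ‖z‖ < g p α r := g_strictAnti hp α (fun i => (hα i).1) hαp hr hlt
  rw [show g p α r = 1 from hchar] at this
  exact absurd (habs.trans_lt this) (lt_irrefl _)

lemma spectrum_abs_eq_imp (hp : 0 < p) (α : Fin p → ℝ)
    (hα : ∀ i, α i ∈ Set.Icc (0:ℝ) 1) (hαp : 0 < α ⟨p - 1, Nat.sub_lt hp Nat.one_pos⟩)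
    (hgcd : (Finset.univ.filter fun i : Fin p => 0 < α i).gcd (fun i => (i : ℕ) + 1) = 1)
    {r : ℝ} (hr : 0 < r) (hchar : ∑ k : Fin p, α k * (r⁻¹) ^ ((k : ℕ) + 1) = 1)
    {z : ℂ} (hz : z ∈ spectrum ℂ (comp' p ℂ (fun k => (α k : ℂ))))
    (habs : ‖z‖ = r) : z = (r : ℂ) := by
  obtain ⟨hz0, hcharz⟩ := spectrum_companion_forward hp α hα hαp hz
  set w : Fin p → ℂ := fun k => (α k : ℂ) * (z⁻¹) ^ ((k : ℕ) + 1) with hw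
  have habs_w : ∀ k, ‖w k‖ = α k * (r⁻¹) ^ ((k : ℕ) + 1) := by
    intro k
    rw [hw]
    rw [norm_mul, norm_pow, norm_inv, Complex.norm_real, Real.norm_eq_abs, habs, abs_of_nonneg (hα k).1]
  have hsumabs : ∑ k, ‖w k‖ = 1 := by
    rw [Finset.sum_congr rfl (fun k _ => habs_w k)]
    exact hchar
  have hre : ∑ k, (w k).re = 1 := by
    have h3 := congrArg Complex.re hcharz
    rw [Complex.re_sum, Complex.one_re] at h3
    exact h3
  have hall : ∀ k ∈ Finset.univ, ‖w k‖ - (w k).re = 0 := by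
    rw [← Finset.sum_eq_zero_iff_of_nonneg (fun k _ => sub_nonneg.mpr (Complex.re_le_norm _))]
    rw [Finset.sum_sub_distrib, hsumabs, hre, sub_self]
  have hkey : ∀ k : Fin p, 0 < α k → (z⁻¹) ^ ((k : ℕ) + 1) = ((r⁻¹ : ℝ) : ℂ) ^ ((k : ℕ) + 1) := by
    intro k hk
    have h1 : ‖w k‖ = (w k).re := by
      have := hall k (Finset.mem_univ k); linarith
    have him : (w k).im = 0 := by
      have h2 := Complex.sq_norm (w k)
      rw [h1, Complex.normSq_apply] at h2
      nlinarith [sq_nonneg (w k).im]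
    have hwk : w k = ((α k * (r⁻¹) ^ ((k : ℕ) + 1) : ℝ) : ℂ) := by
      have hre' : (w k).re = α k * (r⁻¹) ^ ((k : ℕ) + 1) := by rw [← h1, habs_w k]
      apply Complex.ext
      · rw [hre', Complex.ofReal_re]
      · rw [him, Complex.ofReal_im]
    have hαk : ((α k : ℝ) : ℂ) ≠ 0 := by exact_mod_cast ne_of_gt hk
    apply mul_left_cancel₀ hαk
    rw [show (α k : ℂ) * (z⁻¹) ^ ((k : ℕ) + 1) = w k from rfl, hwk]
    push_cast
    ring
  set ζ : ℂ := (r : ℂ) * z⁻¹ with hζ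
  have hζpow : ∀ k ∈ Finset.univ.filter fun i : Fin p => 0 < α i, ζ ^ ((k : ℕ) + 1) = 1 := by
    intro k hk
    rw [Finset.mem_filter] at hk
    rw [hζ, mul_pow, hkey k hk.2]
    have : ((r : ℂ))⁻¹ = ((r⁻¹ : ℝ) : ℂ) := by push_cast; ring
    rw [← this, ← mul_pow, mul_inv_cancel₀ (by exact_mod_cast hr.ne' : (r:ℂ) ≠ 0), one_pow]
  have hdvd : orderOf ζ ∣ 1 := by
    rw [← hgcd]
    exact Finset.dvd_gcd (fun k hk => orderOf_dvd_of_pow_eq_one (hζpow k hk))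
  have hζ1 : ζ = 1 := orderOf_eq_one_iff.mp (Nat.dvd_one.mp hdvd)
  have : (r : ℂ) * z⁻¹ = 1 := hζ1
  rw [mul_inv_eq_one₀ hz0] at this
  exact this.symm

lemma specRad_eq (hp : 0 < p) (α : Fin p → ℝ)
    (hα : ∀ i, α i ∈ Set.Icc (0:ℝ) 1) (hαp : 0 < α ⟨p - 1, Nat.sub_lt hp Nat.one_pos⟩)
    {r : ℝ} (hr : 0 < r) (hchar : ∑ k : Fin p, α k * (r⁻¹) ^ ((k : ℕ) + 1) = 1) :
    specRad (companion p α) = r := by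
  have hcharC : ∑ k : Fin p, (α k : ℂ) * (((r : ℝ) : ℂ)⁻¹) ^ ((k : ℕ) + 1) = 1 := by
    have h0 := congrArg (Complex.ofReal) hchar
    push_cast at h0
    exact_mod_cast h0
  have hrmem : (r : ℂ) ∈ spectrum ℂ (comp' p ℂ (fun k => (α k : ℂ))) :=
    spectrum_companion_backward hp α (by exact_mod_cast hr.ne') hcharC
  rw [specRad, companion_map]
  apply le_antisymm
  · apply csSup_le
    · exact ⟨r, (r : ℂ), hrmem, by simp [abs_of_nonneg hr.le]⟩
    · rintro t ⟨z, hz, rfl⟩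
      exact spectrum_abs_le hp α hα hαp hr hchar hz
  · apply le_csSup
    · refine ⟨r, ?_⟩
      rintro t ⟨z, hz, rfl⟩
      exact spectrum_abs_le hp α hα hαp hr hchar hz
    · exact ⟨(r : ℂ), hrmem, by simp [abs_of_nonneg hr.le]⟩

section E

variable (p : ℕ) (α : Fin p → ℝ) (r : ℝ)

/-- normalizing constants -/
def Dc : ℝ := ∑ k : Fin p, r ^ (-(k : ℤ))

def Ec : ℝ := ∑ k : Fin p, ((k : ℕ) + 1 : ℝ) * α k * r ^ (-((k : ℕ) + 1 : ℤ))

def Tv (i : Fin p) : ℝ :=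
  ∑ ℓ ∈ Finset.univ.filter (fun ℓ : Fin p => i ≤ ℓ), α ℓ * r ^ ((i : ℤ) - (ℓ : ℤ) - 1)

variable {p α r}

lemma zpow_neg_nat (n : ℕ) : r ^ (-(n : ℤ)) = (r⁻¹) ^ n := by
  rw [_root_.zpow_neg, ← zpow_natCast, _root_.inv_zpow]

lemma Dc_pos (hp : 0 < p) (hr : 0 < r) : 0 < Dc p r := by
  refine Finset.sum_pos (fun k _ => zpow_pos hr _) ?_
  exact ⟨⟨0, hp⟩, Finset.mem_univ _⟩

lemma Ec_pos (hp : 0 < p) (hα : ∀ i, 0 ≤ α i) (hαp : 0 < α ⟨p - 1, Nat.sub_lt hp Nat.one_pos⟩) (hr : 0 < r) :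
    0 < Ec p α r := by
  refine Finset.sum_pos' (fun k _ => ?_) ⟨⟨p - 1, by omega⟩, Finset.mem_univ _, ?_⟩
  · have h0 : (0:ℝ) ≤ ((k : ℕ) + 1 : ℝ) := by positivity
    exact mul_nonneg (mul_nonneg h0 (hα k)) (zpow_pos hr _).le
  · have h1 : (0:ℝ) < ((((⟨p - 1, by omega⟩ : Fin p) : ℕ)) + 1 : ℝ) := by positivity
    exact mul_pos (mul_pos h1 hαp) (zpow_pos hr _)

lemma perronU_eq (hr : 0 < r) :
    perronU p r = (Dc p r)⁻¹ • (fun i : Fin p => (r⁻¹) ^ (i : ℕ)) := by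
  funext i
  show r ^ (-(i : ℤ)) / (∑ k : Fin p, r ^ (-(k : ℤ))) = (Dc p r)⁻¹ * (r⁻¹) ^ (i : ℕ)
  rw [show ((i : ℤ)) = ((i : ℕ) : ℤ) from rfl, zpow_neg_nat, div_eq_inv_mul]
  rfl

lemma perronV_eq : perronV p α r = fun i => (Dc p r / Ec p α r) * Tv p α r i := rfl

lemma Tv_zero (hp : 0 < p) (hr : 0 < r)
    (hchar : ∑ k : Fin p, α k * (r⁻¹) ^ ((k : ℕ) + 1) = 1) :
    Tv p α r ⟨0, hp⟩ = 1 := by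
  rw [Tv]
  rw [Finset.filter_true_of_mem (fun ℓ _ => by
    rw [Fin.le_def]; exact Nat.zero_le _)]
  rw [← hchar]
  refine Finset.sum_congr rfl (fun ℓ _ => ?_)
  congr 1
  have hexp : ((⟨0, hp⟩ : Fin p) : ℤ) - (ℓ : ℤ) - 1 = -(((ℓ : ℕ) + 1 : ℕ) : ℤ) := by
    show (0 : ℤ) - ((ℓ : ℕ) : ℤ) - 1 = _
    push_cast
    ring
  rw [hexp, zpow_neg_nat]

/-- the eigen-equation for `u`. -/
lemma mulVec_perronU (hp : 0 < p) (hr : 0 < r)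
    (hchar : ∑ k : Fin p, α k * (r⁻¹) ^ ((k : ℕ) + 1) = 1) :
    companion p α *ᵥ perronU p r = r • perronU p r := by
  rw [perronU_eq hr, companion_eq, Matrix.mulVec_smul,
    comp'_eigen_aux hp α (ne_of_gt hr) hchar, smul_comm]

/-- the eigen-equation for `v`. -/
lemma vecMul_perronV (hp : 0 < p) (hr : 0 < r)
    (hchar : ∑ k : Fin p, α k * (r⁻¹) ^ ((k : ℕ) + 1) = 1) :
    perronV p α r ᵥ* companion p α = r • perronV p α r := by
  funext j
  rw [companion_eq, comp'_vecMul hp]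
  set C := Dc p r / Ec p α r with hC
  have hv : ∀ i, perronV p α r i = C * Tv p α r i := fun i => rfl
  -- key identity : r * Tv j = α j + (Tv (j+1) or 0)
  have hrTv : r * Tv p α r j =
      α j + (if h : (j : ℕ) + 1 < p then Tv p α r ⟨(j : ℕ) + 1, h⟩ else 0) := by
    have hjmem : j ∈ Finset.univ.filter (fun ℓ : Fin p => j ≤ ℓ) := by
      simp [Finset.mem_filter]
    have hsplit : Tv p α r j = α j * r ^ ((j : ℤ) - (j : ℤ) - 1)
        + ∑ ℓ ∈ (Finset.univ.filter (fun ℓ : Fin p => j ≤ ℓ)).erase j,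
            α ℓ * r ^ ((j : ℤ) - (ℓ : ℤ) - 1) := by
      rw [Tv, ← Finset.add_sum_erase _ _ hjmem]
    have herase : (Finset.univ.filter (fun ℓ : Fin p => j ≤ ℓ)).erase j
        = Finset.univ.filter (fun ℓ : Fin p => (j : ℕ) + 1 ≤ (ℓ : ℕ)) := by
      ext ℓ
      simp only [Finset.mem_erase, Finset.mem_filter, Finset.mem_univ, true_and]
      rw [Fin.le_def]
      constructor
      · rintro ⟨hne, hle⟩
        rcases Nat.lt_or_ge (j : ℕ) (ℓ : ℕ) with h | h
        · omega
        · exact absurd (Fin.ext (by omega)) (Ne.symm hne)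
      · intro h
        exact ⟨by intro he; subst he; omega, by omega⟩
    rw [hsplit, mul_add, herase]
    congr 1
    · have h1 : (j : ℤ) - (j : ℤ) - 1 = -((1:ℕ) : ℤ) := by push_cast; ring
      rw [h1, zpow_neg_nat, pow_one]
      field_simp
    · by_cases h : (j : ℕ) + 1 < p
      · rw [dif_pos h, Tv]
        have hfilter : (Finset.univ.filter fun ℓ : Fin p => (⟨(j:ℕ)+1, h⟩ : Fin p) ≤ ℓ)
            = Finset.univ.filter (fun ℓ : Fin p => (j : ℕ) + 1 ≤ (ℓ : ℕ)) := by
          ext ℓ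
          simp only [Finset.mem_filter, Finset.mem_univ, true_and]
          rw [Fin.le_def]
        rw [hfilter, Finset.mul_sum]
        refine Finset.sum_congr rfl (fun ℓ _ => ?_)
        have hexp : (((⟨(j:ℕ)+1, h⟩ : Fin p) : ℤ)) - (ℓ : ℤ) - 1 = ((j : ℤ) - (ℓ : ℤ) - 1) + 1 := by
          show (((j:ℕ) + 1 : ℕ) : ℤ) - ((ℓ:ℕ) : ℤ) - 1 = _
          push_cast
          ring
        rw [hexp, zpow_add_one₀ (ne_of_gt hr)]
        ring
      · rw [dif_neg h, Finset.mul_sum, Finset.sum_eq_zero]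
        intro ℓ hℓ
        rw [Finset.mem_filter] at hℓ
        exfalso
        have := ℓ.2
        omega
  rw [Pi.smul_apply, smul_eq_mul, hv, hv, Tv_zero hp hr hchar, mul_one]
  by_cases h : (j : ℕ) + 1 < p
  · rw [dif_pos h, hv ⟨(j:ℕ)+1, h⟩]
    have h2 := hrTv
    rw [dif_pos h] at h2
    calc C * α j + C * Tv p α r ⟨(j:ℕ)+1, h⟩ = C * (α j + Tv p α r ⟨(j:ℕ)+1, h⟩) := by ring
    _ = C * (r * Tv p α r j) := by rw [← h2]
    _ = r * (C * Tv p α r j) := by ring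
  · rw [dif_neg h]
    have h2 := hrTv
    rw [dif_neg h] at h2
    calc C * α j + 0 = C * (α j + 0) := by ring
    _ = C * (r * Tv p α r j) := by rw [← h2]
    _ = r * (C * Tv p α r j) := by ring

end E

section E2

variable {p : ℕ} {α : Fin p → ℝ} {r : ℝ}

lemma dot_uv (hp : 0 < p) (hα : ∀ i, 0 ≤ α i) (hαp : 0 < α ⟨p - 1, Nat.sub_lt hp Nat.one_pos⟩) (hr : 0 < r)
    (hchar : ∑ k : Fin p, α k * (r⁻¹) ^ ((k : ℕ) + 1) = 1) :
    ∑ i : Fin p, perronU p r i * perronV p α r i = 1 := by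
  have hD := Dc_pos hp hr
  have hE := Ec_pos hp hα hαp hr
  have hterm : ∀ i : Fin p, perronU p r i * perronV p α r i
      = (Ec p α r)⁻¹ * ((r⁻¹) ^ (i : ℕ) * Tv p α r i) := by
    intro i
    rw [perronU_eq hr, perronV_eq]
    show (Dc p r)⁻¹ * (r⁻¹) ^ (i : ℕ) * (Dc p r / Ec p α r * Tv p α r i) = _
    field_simp
  rw [Finset.sum_congr rfl (fun i _ => hterm i), ← Finset.mul_sum]
  have hinner : ∀ i : Fin p, (r⁻¹) ^ (i : ℕ) * Tv p α r i
      = ∑ ℓ : Fin p, (if i ≤ ℓ then α ℓ * (r⁻¹) ^ ((ℓ : ℕ) + 1) else 0) := by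
    intro i
    rw [Tv, Finset.mul_sum, Finset.sum_filter]
    refine Finset.sum_congr rfl (fun ℓ _ => ?_)
    by_cases h : i ≤ ℓ
    · rw [if_pos h, if_pos h]
      rw [← zpow_neg_nat]
      calc r ^ (-((i:ℕ) : ℤ)) * (α ℓ * r ^ ((i : ℤ) - (ℓ : ℤ) - 1))
          = α ℓ * (r ^ (-((i:ℕ) : ℤ)) * r ^ ((i : ℤ) - (ℓ : ℤ) - 1)) := by ring
      _ = α ℓ * r ^ (-((i:ℕ) : ℤ) + ((i : ℤ) - (ℓ : ℤ) - 1)) := by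
          rw [← zpow_add₀ (ne_of_gt hr)]
      _ = α ℓ * r ^ (-((((ℓ:ℕ) + 1) : ℕ) : ℤ)) := by
          have hexp : -(((i:ℕ)) : ℤ) + (((i:ℕ) : ℤ) - ((ℓ:ℕ) : ℤ) - 1)
              = -((((ℓ:ℕ) + 1) : ℕ) : ℤ) := by push_cast; ring
          rw [hexp]
      _ = α ℓ * (r⁻¹) ^ ((ℓ : ℕ) + 1) := by rw [zpow_neg_nat]
    · rw [if_neg h, if_neg h]
  rw [Finset.sum_congr rfl (fun i _ => hinner i), Finset.sum_comm]
  have hcount : ∀ ℓ : Fin p,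
      (∑ i : Fin p, if i ≤ ℓ then α ℓ * (r⁻¹) ^ ((ℓ : ℕ) + 1) else 0)
        = ((ℓ : ℕ) + 1 : ℝ) * (α ℓ * (r⁻¹) ^ ((ℓ : ℕ) + 1)) := by
    intro ℓ
    rw [← Finset.sum_filter]
    rw [show (Finset.univ.filter fun i : Fin p => i ≤ ℓ) = Finset.Iic ℓ by
      ext i; simp [Finset.mem_Iic]]
    rw [Finset.sum_const, Fin.card_Iic, nsmul_eq_mul]
    push_cast
    ring
  rw [Finset.sum_congr rfl (fun ℓ _ => hcount ℓ)]
  have hEc : ∑ ℓ : Fin p, ((ℓ : ℕ) + 1 : ℝ) * (α ℓ * (r⁻¹) ^ ((ℓ : ℕ) + 1)) = Ec p α r := by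
    rw [Ec]
    refine Finset.sum_congr rfl (fun ℓ _ => ?_)
    rw [show (-((ℓ : ℕ) + 1 : ℤ)) = -((((ℓ:ℕ) + 1) : ℕ) : ℤ) by push_cast; ring, zpow_neg_nat]
    ring
  rw [hEc, inv_mul_cancel₀ (ne_of_gt hE)]

variable (p α r) in
/-- the Perron projection -/
def Pr : Matrix (Fin p) (Fin p) ℝ := Matrix.vecMulVec (perronU p r) (perronV p α r)

lemma Pr_mul_Pr (hdot : ∑ i : Fin p, perronU p r i * perronV p α r i = 1) :
    Pr p α r * Pr p α r = Pr p α r := by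
  ext i j
  rw [Matrix.mul_apply, Pr]
  simp only [Matrix.vecMulVec_apply]
  calc ∑ k : Fin p, perronU p r i * perronV p α r k * (perronU p r k * perronV p α r j)
      = (∑ k : Fin p, perronU p r k * perronV p α r k) * (perronU p r i * perronV p α r j) := by
        rw [Finset.sum_mul]
        exact Finset.sum_congr rfl (fun k _ => by ring)
  _ = perronU p r i * perronV p α r j := by rw [hdot, one_mul]

lemma comp_mul_Pr (heig : companion p α *ᵥ perronU p r = r • perronU p r) :
    companion p α * Pr p α r = r • Pr p α r := by
  ext i j
  rw [Matrix.mul_apply, Pr]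
  simp only [Matrix.smul_apply, Matrix.vecMulVec_apply, smul_eq_mul]
  calc ∑ k : Fin p, companion p α i k * (perronU p r k * perronV p α r j)
      = (∑ k : Fin p, companion p α i k * perronU p r k) * perronV p α r j := by
        rw [Finset.sum_mul]
        exact Finset.sum_congr rfl (fun k _ => by ring)
  _ = (companion p α *ᵥ perronU p r) i * perronV p α r j := rfl
  _ = r * (perronU p r i * perronV p α r j) := by rw [heig]; simp [mul_assoc]

lemma Pr_mul_comp (heig : perronV p α r ᵥ* companion p α = r • perronV p α r) :
    Pr p α r * companion p α = r • Pr p α r := by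
  ext i j
  rw [Matrix.mul_apply, Pr]
  simp only [Matrix.smul_apply, Matrix.vecMulVec_apply, smul_eq_mul]
  calc ∑ k : Fin p, perronU p r i * perronV p α r k * companion p α k j
      = perronU p r i * (∑ k : Fin p, perronV p α r k * companion p α k j) := by
        rw [Finset.mul_sum]
        exact Finset.sum_congr rfl (fun k _ => by ring)
  _ = perronU p r i * (perronV p α r ᵥ* companion p α) j := rfl
  _ = r * (perronU p r i * perronV p α r j) := by rw [heig]; simp; ring

lemma B_pow_eq (hr : 0 < r)
    (hdot : ∑ i : Fin p, perronU p r i * perronV p α r i = 1)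
    (heigu : companion p α *ᵥ perronU p r = r • perronU p r)
    (heigv : perronV p α r ᵥ* companion p α = r • perronV p α r)
    {n : ℕ} (hn : 1 ≤ n) :
    (r⁻¹ • companion p α - Pr p α r) ^ n = (r⁻¹ • companion p α) ^ n - Pr p α r := by
  set A' := r⁻¹ • companion p α with hA'
  set Pp := Pr p α r with hPp
  have hA'Pp : A' * Pp = Pp := by
    rw [hA', Matrix.smul_mul, comp_mul_Pr heigu, smul_smul, inv_mul_cancel₀ (ne_of_gt hr), one_smul]
  have hPpA' : Pp * A' = Pp := by
    rw [hA', Matrix.mul_smul, Pr_mul_comp heigv, smul_smul, inv_mul_cancel₀ (ne_of_gt hr), one_smul]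
  have hPpPp : Pp * Pp = Pp := Pr_mul_Pr hdot
  have hA'nPp : ∀ m : ℕ, A' ^ m * Pp = Pp := by
    intro m
    induction m with
    | zero => rw [pow_zero, one_mul]
    | succ m ih => rw [pow_succ, mul_assoc, hA'Pp, ih]
  induction n with
  | zero => omega
  | succ n ih =>
    by_cases hn1 : 1 ≤ n
    · rw [pow_succ, ih hn1, pow_succ]
      rw [sub_mul, mul_sub, mul_sub, hA'nPp n, hPpA', hPpPp]
      abel
    · have : n = 0 := by omega
      subst this
      rw [pow_one, pow_one]

end E2

section F1

variable {p : ℕ} {α : Fin p → ℝ} {r : ℝ}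

lemma mulVec_map (M : Matrix (Fin p) (Fin p) ℝ) (y : Fin p → ℝ) :
    (M.map (Complex.ofReal : ℝ → ℂ)) *ᵥ (fun i => ((y i : ℝ) : ℂ))
      = fun i => (((M *ᵥ y) i : ℝ) : ℂ) := by
  funext i
  show ∑ j, (M i j : ℂ) * (y j : ℂ) = (((∑ j, M i j * y j : ℝ)) : ℂ)
  push_cast
  rfl

lemma vecMul_map (M : Matrix (Fin p) (Fin p) ℝ) (w : Fin p → ℝ) :
    (fun i => ((w i : ℝ) : ℂ)) ᵥ* (M.map (Complex.ofReal : ℝ → ℂ))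
      = fun j => (((w ᵥ* M) j : ℝ) : ℂ) := by
  funext j
  show ∑ i, (w i : ℂ) * (M i j : ℂ) = (((∑ i, w i * M i j : ℝ)) : ℂ)
  push_cast
  rfl

lemma Bc_eq (hr : 0 < r) :
    (r⁻¹ • companion p α - Pr p α r).map (Complex.ofReal : ℝ → ℂ)
      = ((r : ℂ))⁻¹ • ((companion p α).map (Complex.ofReal : ℝ → ℂ))
        - (Pr p α r).map (Complex.ofReal : ℝ → ℂ) := by
  ext i j
  simp only [Matrix.map_apply, Matrix.sub_apply, Matrix.smul_apply, smul_eq_mul]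
  push_cast
  ring

lemma Bc_spectrum_lt (hp : 0 < p)
    (hα : ∀ i, α i ∈ Set.Icc (0:ℝ) 1) (hαp : 0 < α ⟨p - 1, Nat.sub_lt hp Nat.one_pos⟩)
    (hgcd : (Finset.univ.filter fun i : Fin p => 0 < α i).gcd (fun i => (i : ℕ) + 1) = 1)
    (hr : 0 < r) (hchar : ∑ k : Fin p, α k * (r⁻¹) ^ ((k : ℕ) + 1) = 1)
    {μ : ℂ} (hμ : μ ∈ spectrum ℂ ((r⁻¹ • companion p α - Pr p α r).map
      (Complex.ofReal : ℝ → ℂ))) :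
    ‖μ‖ < 1 := by
  have hdot := dot_uv hp (fun i => (hα i).1) hαp hr hchar
  have heigu := mulVec_perronU hp hr hchar
  have heigv := vecMul_perronV hp hr hchar
  set Ac := (companion p α).map (Complex.ofReal : ℝ → ℂ) with hAc
  set Pc := (Pr p α r).map (Complex.ofReal : ℝ → ℂ) with hPc
  rw [Bc_eq hr] at hμ
  obtain ⟨x, hx0, hx⟩ := (mem_spectrum_iff _ _).mp hμ
  by_cases hμ0 : μ = 0
  · rw [hμ0]
    simpa using one_pos
  -- the complexified left eigenvector
  set vc : Fin p → ℂ := fun i => ((perronV p α r i : ℝ) : ℂ) with hvc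
  have hvBc : vc ᵥ* (((r : ℂ))⁻¹ • Ac - Pc) = 0 := by
    have h1 : vc ᵥ* Ac = (r : ℂ) • vc := by
      rw [hAc, hvc, vecMul_map]
      funext j
      rw [heigv]
      simp only [Pi.smul_apply, smul_eq_mul]
      push_cast
      ring
    have h2 : vc ᵥ* Pc = vc := by
      rw [hPc, hvc, vecMul_map]
      funext j
      have : (perronV p α r ᵥ* Pr p α r) j = perronV p α r j := by
        show ∑ i, perronV p α r i * (Pr p α r) i j = _
        have : ∀ i, perronV p α r i * (Pr p α r) i j
            = (perronU p r i * perronV p α r i) * perronV p α r j := by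
          intro i
          show perronV p α r i * (perronU p r i * perronV p α r j) = _
          ring
        rw [Finset.sum_congr rfl (fun i _ => this i), ← Finset.sum_mul, hdot, one_mul]
      rw [this]
    have hsm : vc ᵥ* (((r : ℂ))⁻¹ • Ac) = ((r : ℂ))⁻¹ • (vc ᵥ* Ac) := by
      funext j
      show ∑ i, vc i * (((r:ℂ))⁻¹ • Ac) i j = ((r:ℂ))⁻¹ * ∑ i, vc i * Ac i j
      rw [Finset.mul_sum]
      exact Finset.sum_congr rfl (fun i _ => by
        rw [Matrix.smul_apply, smul_eq_mul]; ring)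
    rw [Matrix.vecMul_sub, hsm, h1, h2, smul_smul,
      inv_mul_cancel₀ (by exact_mod_cast hr.ne' : (r:ℂ) ≠ 0), one_smul, sub_self]
  have hvx : vc ⬝ᵥ x = 0 := by
    have h3 : μ * (vc ⬝ᵥ x) = 0 := by
      calc μ * (vc ⬝ᵥ x) = vc ⬝ᵥ (μ • x) := by
            rw [dotProduct_smul]; rfl
      _ = vc ⬝ᵥ ((((r : ℂ))⁻¹ • Ac - Pc) *ᵥ x) := by rw [hx]
      _ = (vc ᵥ* (((r : ℂ))⁻¹ • Ac - Pc)) ⬝ᵥ x := by rw [Matrix.dotProduct_mulVec]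
      _ = 0 := by rw [hvBc]; exact zero_dotProduct x
    exact (mul_eq_zero.mp h3).resolve_left hμ0
  have hPcx : Pc *ᵥ x = 0 := by
    funext i
    show ∑ j, ((Pr p α r i j : ℝ) : ℂ) * x j = 0
    have : ∀ j, ((Pr p α r i j : ℝ) : ℂ) * x j
        = ((perronU p r i : ℝ) : ℂ) * (vc j * x j) := by
      intro j
      show (((perronU p r i * perronV p α r j : ℝ)) : ℂ) * x j = _
      push_cast
      ring
    rw [Finset.sum_congr rfl (fun j _ => this j), ← Finset.mul_sum]
    rw [show ∑ j, vc j * x j = vc ⬝ᵥ x from rfl, hvx, mul_zero]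
  have hAcx : Ac *ᵥ x = ((r : ℂ) * μ) • x := by
    have h4 : (((r : ℂ))⁻¹ • Ac) *ᵥ x - Pc *ᵥ x = μ • x := by
      rw [← Matrix.sub_mulVec, hx]
    rw [hPcx, sub_zero, Matrix.smul_mulVec] at h4
    have h5 : (r : ℂ) • (((r : ℂ))⁻¹ • (Ac *ᵥ x)) = (r : ℂ) • (μ • x) := congrArg _ h4
    rw [smul_smul, smul_smul, mul_inv_cancel₀ (by exact_mod_cast hr.ne' : (r:ℂ) ≠ 0),
      one_smul] at h5
    exact h5
  have hrμmem : (r : ℂ) * μ ∈ spectrum ℂ (comp' p ℂ (fun k => (α k : ℂ))) := by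
    rw [← companion_map]
    exact (mem_spectrum_iff _ _).mpr ⟨x, hx0, hAcx⟩
  have hle : ‖(r : ℂ) * μ‖ ≤ r := spectrum_abs_le hp α hα hαp hr hchar hrμmem
  have habsle : ‖μ‖ ≤ 1 := by
    rw [norm_mul, Complex.norm_real, Real.norm_eq_abs, abs_of_nonneg hr.le] at hle
    nlinarith [norm_nonneg μ]
  rcases lt_or_eq_of_le habsle with h | h
  · exact h
  -- case |μ| = 1 : then μ = 1 and we derive a contradiction
  exfalso
  have habs_eq : ‖(r : ℂ) * μ‖ = r := by
    rw [norm_mul, Complex.norm_real, Real.norm_eq_abs, abs_of_nonneg hr.le, h, mul_one]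
  have hrμ : (r : ℂ) * μ = (r : ℂ) :=
    spectrum_abs_eq_imp hp α hα hαp hgcd hr hchar hrμmem habs_eq
  have hμ1 : μ = 1 := by
    have := mul_left_cancel₀ (by exact_mod_cast hr.ne' : (r:ℂ) ≠ 0)
      (by rw [hrμ, mul_one] : (r : ℂ) * μ = (r : ℂ) * 1)
    exact this
  rw [hμ1, mul_one] at hAcx
  have hD := Dc_pos hp hr
  have hAcx' : comp' p ℂ (fun k => (α k : ℂ)) *ᵥ x = (r : ℂ) • x := by
    rw [← companion_map, ← hAc]
    exact hAcx
  have hrC : ((r : ℝ) : ℂ) ≠ 0 := by exact_mod_cast hr.ne'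
  have hstruct := eigvec_structure hp (fun k => (α k : ℂ)) hrC hAcx'
  have hsum_real : ∑ i : Fin p, perronV p α r i * (r⁻¹) ^ (i : ℕ) = Dc p r := by
    have hterm : ∀ i : Fin p, perronV p α r i * (r⁻¹) ^ (i : ℕ)
        = Dc p r * (perronU p r i * perronV p α r i) := by
      intro i
      rw [perronU_eq hr]
      show perronV p α r i * (r⁻¹) ^ (i : ℕ)
        = Dc p r * (((Dc p r)⁻¹ * (r⁻¹) ^ (i : ℕ)) * perronV p α r i)
      rw [show Dc p r * (((Dc p r)⁻¹ * (r⁻¹) ^ (i : ℕ)) * perronV p α r i)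
        = (Dc p r * (Dc p r)⁻¹) * ((r⁻¹) ^ (i : ℕ) * perronV p α r i) by ring,
        mul_inv_cancel₀ (ne_of_gt hD), one_mul]
      ring
    rw [Finset.sum_congr rfl (fun i _ => hterm i), ← Finset.mul_sum, hdot, mul_one]
  have hdcx : ((Dc p r : ℝ) : ℂ) * x ⟨0, hp⟩ = 0 := by
    have h6 : ∀ i : Fin p, vc i * x i
        = ((perronV p α r i * (r⁻¹) ^ (i : ℕ) : ℝ) : ℂ) * x ⟨0, hp⟩ := by
      intro i
      rw [hstruct i, hvc]
      push_cast
      ring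
    have hsumc : ∑ i, vc i * x i = ((Dc p r : ℝ) : ℂ) * x ⟨0, hp⟩ := by
      rw [Finset.sum_congr rfl (fun i _ => h6 i), ← Finset.sum_mul, ← Complex.ofReal_sum,
        hsum_real]
    rw [← hsumc]
    exact hvx
  have hx00 : x ⟨0, hp⟩ = 0 := by
    have : ((Dc p r : ℝ) : ℂ) ≠ 0 := by exact_mod_cast (ne_of_gt hD)
    exact (mul_eq_zero.mp hdcx).resolve_left this
  apply hx0
  funext i
  rw [hstruct i, hx00, mul_zero]
  rfl

end F1

section G

open scoped Matrix.Norms.L2Operator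

variable {p : ℕ} {α : Fin p → ℝ} {r : ℝ}

lemma opNorm_eq (M : Matrix (Fin p) (Fin p) ℝ) : opNorm M = ‖M‖ := rfl

lemma real_opNorm_le_complex (M : Matrix (Fin p) (Fin p) ℝ) :
    opNorm M ≤ ‖M.map (Complex.ofReal : ℝ → ℂ)‖ := by
  rw [show opNorm M = ‖Matrix.toEuclideanCLM (𝕜 := ℝ) M‖ from rfl]
  refine ContinuousLinearMap.opNorm_le_bound _ (norm_nonneg _) (fun x => ?_)
  set y : Fin p → ℝ := WithLp.equiv 2 (Fin p → ℝ) x with hy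
  set yc : EuclideanSpace ℂ (Fin p) := (WithLp.equiv 2 (Fin p → ℂ)).symm (fun i => (y i : ℂ))
    with hyc
  have hnx : ‖yc‖ = ‖x‖ := by
    rw [EuclideanSpace.norm_eq, EuclideanSpace.norm_eq]
    congr 1
    refine Finset.sum_congr rfl (fun i _ => ?_)
    have h1 : yc i = ((y i : ℝ) : ℂ) := rfl
    have h2 : x i = y i := rfl
    rw [h1, h2, Complex.norm_real]
  have hcomp : ∀ i, (Matrix.toEuclideanCLM (𝕜 := ℝ) M x) i = (M *ᵥ y) i := by
    intro i
    have h := congrFun (Matrix.ofLp_toEuclideanCLM (𝕜 := ℝ) M x) i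
    exact h
  have hccomp : ∀ i, ((EuclideanSpace.equiv (Fin p) ℂ).symm
      ((M.map (Complex.ofReal : ℝ → ℂ)) *ᵥ yc)) i = (((M *ᵥ y) i : ℝ) : ℂ) := by
    intro i
    have h1 : ((EuclideanSpace.equiv (Fin p) ℂ).symm
        ((M.map (Complex.ofReal : ℝ → ℂ)) *ᵥ yc)) i
        = ((M.map (Complex.ofReal : ℝ → ℂ)) *ᵥ yc) i := rfl
    have h2 : (M.map (Complex.ofReal : ℝ → ℂ)) *ᵥ (yc : Fin p → ℂ)
        = (M.map (Complex.ofReal : ℝ → ℂ)) *ᵥ (fun i => ((y i : ℝ) : ℂ)) := rfl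
    rw [h1, h2, mulVec_map]
  have hnorm_eq : ‖Matrix.toEuclideanCLM (𝕜 := ℝ) M x‖
      = ‖(EuclideanSpace.equiv (Fin p) ℂ).symm ((M.map (Complex.ofReal : ℝ → ℂ)) *ᵥ yc)‖ := by
    rw [EuclideanSpace.norm_eq, EuclideanSpace.norm_eq]
    congr 1
    refine Finset.sum_congr rfl (fun i _ => ?_)
    rw [hcomp i, hccomp i, Complex.norm_real]
  rw [hnorm_eq, ← hnx]
  exact Matrix.l2_opNorm_mulVec _ yc

lemma exists_geometric (hp : 0 < p)
    (hα : ∀ i, α i ∈ Set.Icc (0:ℝ) 1) (hαp : 0 < α ⟨p - 1, Nat.sub_lt hp Nat.one_pos⟩)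
    (hgcd : (Finset.univ.filter fun i : Fin p => 0 < α i).gcd (fun i => (i : ℕ) + 1) = 1)
    (hr : 0 < r) (hchar : ∑ k : Fin p, α k * (r⁻¹) ^ ((k : ℕ) + 1) = 1) :
    ∃ ρ₀ : ℝ, 0 < ρ₀ ∧ ρ₀ < 1 ∧ ∃ N : ℕ, ∀ n ≥ N,
      ‖((r⁻¹ • companion p α - Pr p α r).map (Complex.ofReal : ℝ → ℂ)) ^ n‖ ≤ ρ₀ ^ n := by
  haveI : Nonempty (Fin p) := ⟨⟨0, hp⟩⟩
  haveI : CompleteSpace (Matrix (Fin p) (Fin p) ℂ) := FiniteDimensional.complete ℂ _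
  set Bc := (r⁻¹ • companion p α - Pr p α r).map (Complex.ofReal : ℝ → ℂ) with hBc
  have hfin : (spectrum ℂ Bc).Finite := Matrix.finite_spectrum Bc
  have hne : (spectrum ℂ Bc).Nonempty := spectrum.nonempty Bc
  have hneF : hfin.toFinset.Nonempty := by
    obtain ⟨z, hz⟩ := hne
    exact ⟨z, hfin.mem_toFinset.mpr hz⟩
  set ρ₁ : ℝ := hfin.toFinset.sup' hneF (fun z => ‖z‖) with hρ₁
  have hρ₁lt : ρ₁ < 1 := by
    rw [hρ₁, Finset.sup'_lt_iff]
    intro z hz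
    exact Bc_spectrum_lt hp hα hαp hgcd hr hchar (hfin.mem_toFinset.mp hz)
  have hρ₁0 : 0 ≤ ρ₁ := by
    obtain ⟨z, hz⟩ := hneF
    exact (norm_nonneg z).trans (Finset.le_sup' _ hz)
  set ρ₀ : ℝ := (1 + ρ₁) / 2 with hρ₀
  have hρ₀pos : 0 < ρ₀ := by rw [hρ₀]; linarith
  have hρ₀lt : ρ₀ < 1 := by rw [hρ₀]; linarith
  have hρ₁ρ₀ : ρ₁ < ρ₀ := by rw [hρ₀]; linarith
  refine ⟨ρ₀, hρ₀pos, hρ₀lt, ?_⟩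
  have hsr : spectralRadius ℂ Bc ≤ ENNReal.ofReal ρ₁ := by
    rw [spectralRadius]
    refine iSup₂_le (fun z hz => ?_)
    rw [← ENNReal.ofReal_coe_nnreal]
    refine ENNReal.ofReal_le_ofReal ?_
    exact Finset.le_sup' (f := fun z : ℂ => ‖z‖) (hfin.mem_toFinset.mpr hz)
  have hlt : spectralRadius ℂ Bc < ENNReal.ofReal ρ₀ :=
    hsr.trans_lt ((ENNReal.ofReal_lt_ofReal_iff hρ₀pos).mpr hρ₁ρ₀)
  have htend := spectrum.pow_nnnorm_pow_one_div_tendsto_nhds_spectralRadius Bc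
  have hev : ∀ᶠ n : ℕ in atTop,
      ((‖Bc ^ n‖₊ : ENNReal)) ^ ((1 : ℝ) / n) < ENNReal.ofReal ρ₀ :=
    htend.eventually_lt_const hlt
  obtain ⟨N, hN⟩ := Filter.eventually_atTop.mp hev
  refine ⟨max N 1, fun n hn => ?_⟩
  have hn1 : 1 ≤ n := le_trans (le_max_right N 1) hn
  have hnN : N ≤ n := le_trans (le_max_left N 1) hn
  have h1 := (hN n hnN).le
  have h2 : ((‖Bc ^ n‖₊ : ENNReal) ^ ((1 : ℝ) / n)) ^ (n : ℝ)
      ≤ (ENNReal.ofReal ρ₀) ^ (n : ℝ) :=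
    ENNReal.rpow_le_rpow h1 (by positivity)
  rw [← ENNReal.rpow_mul] at h2
  have hexp : (1 : ℝ) / n * n = 1 := by
    field_simp
  rw [hexp, ENNReal.rpow_one] at h2
  have h3 : (ENNReal.ofReal ρ₀) ^ ((n : ℕ) : ℝ) = ENNReal.ofReal (ρ₀ ^ n) := by
    rw [ENNReal.ofReal_rpow_of_pos hρ₀pos, Real.rpow_natCast]
  rw [h3] at h2
  rw [← ENNReal.ofReal_coe_nnreal] at h2
  exact (ENNReal.ofReal_le_ofReal_iff (by positivity)).mp h2

lemma final_bound (hp : 0 < p)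
    (hα : ∀ i, α i ∈ Set.Icc (0:ℝ) 1) (hαp : 0 < α ⟨p - 1, Nat.sub_lt hp Nat.one_pos⟩)
    (hgcd : (Finset.univ.filter fun i : Fin p => 0 < α i).gcd (fun i => (i : ℕ) + 1) = 1)
    (hr : 0 < r) (hchar : ∑ k : Fin p, α k * (r⁻¹) ^ ((k : ℕ) + 1) = 1) :
    ∃ ρ₀ : ℝ, 0 < ρ₀ ∧ ρ₀ < 1 ∧ ∃ N : ℕ, 1 ≤ N ∧ ∀ n ≥ N,
      opNorm ((r⁻¹ • companion p α - Pr p α r) ^ n) ≤ ρ₀ ^ n := by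
  obtain ⟨ρ₀, h1, h2, N, hN⟩ := exists_geometric hp hα hαp hgcd hr hchar
  refine ⟨ρ₀, h1, h2, max N 1, le_max_right _ _, fun n hn => ?_⟩
  have hmap : ((r⁻¹ • companion p α - Pr p α r) ^ n).map (Complex.ofReal : ℝ → ℂ)
      = (((r⁻¹ • companion p α - Pr p α r)).map (Complex.ofReal : ℝ → ℂ)) ^ n := by
    have h := map_pow
      (Complex.ofRealHom.mapMatrix : Matrix (Fin p) (Fin p) ℝ →+* Matrix (Fin p) (Fin p) ℂ)
      (r⁻¹ • companion p α - Pr p α r) n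
    exact h
  calc opNorm ((r⁻¹ • companion p α - Pr p α r) ^ n)
      ≤ ‖((r⁻¹ • companion p α - Pr p α r) ^ n).map (Complex.ofReal : ℝ → ℂ)‖ :=
        real_opNorm_le_complex _
  _ = ‖(((r⁻¹ • companion p α - Pr p α r)).map (Complex.ofReal : ℝ → ℂ)) ^ n‖ := by rw [hmap]
  _ ≤ ρ₀ ^ n := hN n (le_trans (le_max_left _ _) (le_trans hn (le_refl n)))

end G

end PFAux

/-- geometric rate of convergence: there are `c > 0` and `0 < ρ₀ < 1` such
that `‖ρ(A)^{−n} A^n − Π‖ ≤ c ρ₀^n` for all `n`, where `Π = u vᵀ`. -/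
theorem normalized_powers_geometric_rate
    (p : ℕ) (hp : 0 < p) (α : Fin p → ℝ)
    (hα : ∀ i, α i ∈ Set.Icc (0 : ℝ) 1)
    (hαp : 0 < α ⟨p - 1, by omega⟩)
    (hgcd : (Finset.univ.filter fun i : Fin p => 0 < α i).gcd
        (fun i => (i : ℕ) + 1) = 1) :
    ∃ c : ℝ, 0 < c ∧ ∃ ρ₀ : ℝ, 0 < ρ₀ ∧ ρ₀ < 1 ∧
      ∀ n : ℕ,
        opNorm ((specRad (companion p α) ^ n)⁻¹ • (companion p α) ^ n -
            Matrix.vecMulVec (perronU p (specRad (companion p α)))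
              (perronV p α (specRad (companion p α))))
          ≤ c * ρ₀ ^ n := by
  classical
  obtain ⟨r, hr, hcharg⟩ := PFAux.exists_root hp α hα hαp
  have hchar : ∑ k : Fin p, α k * (r⁻¹) ^ ((k : ℕ) + 1) = 1 := hcharg
  have hs : specRad (companion p α) = r := PFAux.specRad_eq hp α hα hαp hr hchar
  have hdot := PFAux.dot_uv hp (fun i => (hα i).1) hαp hr hchar
  have heigu := PFAux.mulVec_perronU hp hr hchar
  have heigv := PFAux.vecMul_perronV hp hr hchar
  obtain ⟨ρ₀, hρpos, hρlt, N, hN1, hN⟩ := PFAux.final_bound hp hα hαp hgcd hr hchar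
  have hMB : ∀ n, 1 ≤ n →
      ((specRad (companion p α) ^ n)⁻¹ • (companion p α) ^ n -
        Matrix.vecMulVec (perronU p (specRad (companion p α)))
          (perronV p α (specRad (companion p α))))
        = (r⁻¹ • companion p α - PFAux.Pr p α r) ^ n := by
    intro n hn
    rw [hs, PFAux.B_pow_eq hr hdot heigu heigv hn, smul_pow, inv_pow]
    rfl
  set X : ℕ → ℝ := fun n => opNorm ((specRad (companion p α) ^ n)⁻¹ • (companion p α) ^ n -
      Matrix.vecMulVec (perronU p (specRad (companion p α)))
        (perronV p α (specRad (companion p α)))) with hXdef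
  have hrange : (0 : ℕ) ∈ Finset.range (N + 1) := Finset.mem_range.mpr (by omega)
  set c : ℝ := max 1 ((Finset.range (N + 1)).sup' ⟨0, hrange⟩ (fun n => X n / ρ₀ ^ n)) with hc
  have hc1 : (1:ℝ) ≤ c := le_max_left _ _
  refine ⟨c, lt_of_lt_of_le one_pos hc1, ρ₀, hρpos, hρlt, fun n => ?_⟩
  show X n ≤ c * ρ₀ ^ n
  by_cases hn : n < N + 1
  · have hf : X n / ρ₀ ^ n ≤ c :=
      le_trans (Finset.le_sup' (f := fun m => X m / ρ₀ ^ m) (Finset.mem_range.mpr hn)) (le_max_right _ _)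
    have hρn : (0:ℝ) < ρ₀ ^ n := by positivity
    calc X n = (X n / ρ₀ ^ n) * ρ₀ ^ n := by field_simp
    _ ≤ c * ρ₀ ^ n := mul_le_mul_of_nonneg_right hf hρn.le
  · push_neg at hn
    have hn1 : 1 ≤ n := le_trans hN1 (by omega)
    have hb := hN n (by omega)
    have hXn : X n = opNorm ((r⁻¹ • companion p α - PFAux.Pr p α r) ^ n) := by
      rw [hXdef]
      exact congrArg opNorm (hMB n hn1)
    rw [hXn]
    calc opNorm ((r⁻¹ • companion p α - PFAux.Pr p α r) ^ n) ≤ ρ₀ ^ n := hb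
    _ ≤ c * ρ₀ ^ n := le_mul_of_one_le_left (by positivity) hc1

end
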